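/- arXiv:1909.10917 — 5 statements merged into one kernel-verified Lean document; each statement's English description precedes it below -/
import Mathlib

section
/- For a function $w \in W^{1,1}(\mathbb{R})$ (i.e., $w, w' \in L^1(\mathbb{R})$) whose second derivative is a finite Borel measure $\nu$ on $\mathbb{R}$, and a mesh size $h > 0$ with grid points $x_i = ih$, the trapezoidal-type approximation of the integral satisfies $\left| \int_{\mathbb{R}} w(x)\,dx - \sum_{i \in \mathbb{Z}} h\, w(x_i) \right| \le h^2 |\nu|(\mathbb{R})$. -/
open MeasureTheory Set intervalIntegral

instance tv_finite (ν : SignedMeasure ℝ) : IsFiniteMeasure ν.totalVariation := by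
  unfold MeasureTheory.SignedMeasure.totalVariation; infer_instance

lemma abs_apply_le_tv (ν : SignedMeasure ℝ) {s : Set ℝ} (hs : MeasurableSet s) :
    |ν s| ≤ (ν.totalVariation s).toReal := by
  conv_lhs => rw [← ν.toSignedMeasure_toJordanDecomposition]
  rw [JordanDecomposition.toSignedMeasure, VectorMeasure.sub_apply,
    Measure.toSignedMeasure_apply_measurable hs, Measure.toSignedMeasure_apply_measurable hs,
    SignedMeasure.totalVariation, Measure.add_apply,
    ENNReal.toReal_add (measure_ne_top _ _) (measure_ne_top _ _)]
  exact (abs_sub _ _).trans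
    (by rw [abs_of_nonneg measureReal_nonneg, abs_of_nonneg measureReal_nonneg]; exact le_rfl)

/-- Trapezoidal-type quadrature error for `w ∈ W^{1,1}(ℝ)` whose second derivative is a
finite (signed) Borel measure `ν`: the error is at most `h² |ν|(ℝ)`. -/
theorem stmt_0 (w : ℝ → ℝ) (ν : SignedMeasure ℝ) (h : ℝ) (hh : 0 < h)
    (hw : Differentiable ℝ w)
    (hwL1 : Integrable w) (hw'L1 : Integrable (deriv w))
    (hν : ∀ a b : ℝ, a ≤ b → deriv w b - deriv w a = ν (Set.Ioc a b)) :
    |(∫ x, w x) - ∑' i : ℤ, h * w (i * h)| ≤ h ^ 2 * (ν.totalVariation Set.univ).toReal := by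
  set μ := ν.totalVariation with hμdef
  have hd : ∀ x : ℝ, HasDerivAt w (deriv w x) x := fun x => (hw x).hasDerivAt
  have hwc : Continuous w := hw.continuous
  -- the cells
  set c : ℤ → Set ℝ := fun i => Set.Ioc ((i : ℝ) * h) ((i : ℝ) * h + h) with hc
  have hmeas : ∀ i : ℤ, MeasurableSet (c i) := fun _ => measurableSet_Ioc
  have hcover : (⋃ i : ℤ, c i) = Set.univ := by
    ext x
    simp only [hc, Set.mem_iUnion, Set.mem_univ, iff_true, Set.mem_Ioc]
    refine ⟨⌈x / h⌉ - 1, ?_, ?_⟩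
    · push_cast
      have := Int.ceil_lt_add_one (x / h)
      rw [← lt_div_iff₀ hh]
      linarith
    · have hx : x ≤ (⌈x / h⌉ : ℝ) * h := by rw [← div_le_iff₀ hh]; exact Int.le_ceil _
      push_cast
      linarith
  have hdisj : Pairwise (Function.onFun Disjoint c) := by
    intro i j hij
    have key : ∀ i j : ℤ, i < j →
        Disjoint (Set.Ioc ((i : ℝ) * h) ((i : ℝ) * h + h))
          (Set.Ioc ((j : ℝ) * h) ((j : ℝ) * h + h)) := by
      intro i j hij
      apply Set.Ioc_disjoint_Ioc.2
      have h1 : (i : ℝ) + 1 ≤ j := by exact_mod_cast hij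
      have h2 : (i : ℝ) * h + h ≤ (j : ℝ) * h := by nlinarith
      calc min ((i : ℝ) * h + h) ((j : ℝ) * h + h) ≤ (i : ℝ) * h + h := min_le_left _ _
        _ ≤ max ((i : ℝ) * h) ((j : ℝ) * h) := le_trans h2 (le_max_right _ _)
    rcases lt_or_gt_of_ne hij with hlt | hlt
    · exact key i j hlt
    · exact (key j i hlt).symm
  -- sum of cell integrals of w
  have hFsum : HasSum (fun i : ℤ => ∫ x in c i, w x) (∫ x, w x) := by
    have := hasSum_integral_iUnion hmeas hdisj (hwL1.integrableOn)
    rwa [hcover, Measure.restrict_univ] at this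
  -- the integral of the derivative vanishes
  have hd0 : (∫ x, deriv w x) = 0 := by
    have h1 : Filter.Tendsto w Filter.atTop (nhds 0) :=
      tendsto_zero_of_hasDerivAt_of_integrableOn_Ioi (a := 0) (fun x _ => hd x)
        hw'L1.integrableOn hwL1.integrableOn
    have h2 : Filter.Tendsto w Filter.atBot (nhds 0) :=
      tendsto_zero_of_hasDerivAt_of_integrableOn_Iic (a := 0) (fun x _ => hd x)
        hw'L1.integrableOn hwL1.integrableOn
    have h3 : ∫ x in Set.Ioi (0 : ℝ), deriv w x = 0 - w 0 :=
      integral_Ioi_of_hasDerivAt_of_tendsto' (fun x _ => hd x) hw'L1.integrableOn h1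
    have h4 : ∫ x in Set.Iic (0 : ℝ), deriv w x = w 0 - 0 :=
      integral_Iic_of_hasDerivAt_of_tendsto (hwc.continuousWithinAt)
        (fun x _ => hd x) hw'L1.integrableOn h2
    have h5 := integral_add_compl (measurableSet_Iic (a := (0 : ℝ))) hw'L1
    rw [Set.compl_Iic] at h5
    rw [← h5, h3, h4]; ring
  have hDsum : HasSum (fun i : ℤ => ∫ x in c i, deriv w x) 0 := by
    have := hasSum_integral_iUnion hmeas hdisj (hw'L1.integrableOn)
    rwa [hcover, Measure.restrict_univ, hd0] at this
  -- the per-cell remainder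
  set S : ℤ → ℝ := fun i => ∫ t in ((i : ℝ) * h)..((i : ℝ) * h + h),
    (deriv w t - deriv w ((i : ℝ) * h)) * ((i : ℝ) * h + h / 2 - t) with hS
  -- per-cell identity
  have hcell : ∀ i : ℤ, h * w ((i : ℝ) * h)
      = (∫ x in c i, w x) - S i - (h / 2) * (∫ x in c i, deriv w x) := by
    intro i
    set a : ℝ := (i : ℝ) * h with ha
    have hab : a ≤ a + h := by linarith
    have hsetD : (∫ x in c i, deriv w x) = ∫ t in a..(a + h), deriv w t :=
      (integral_of_le hab).symm
    -- integration by parts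
    have ii1 : IntervalIntegrable (fun t => deriv w t * (a + h - t)) volume a (a + h) :=
      (hw'L1.intervalIntegrable).mul_continuousOn
        ((continuous_const.sub continuous_id).continuousOn)
    have ii2 : IntervalIntegrable (fun t => w t * (0 - 1)) volume a (a + h) :=
      ((hwc.mul continuous_const).intervalIntegrable _ _)
    have IB := integral_eq_sub_of_hasDerivAt (f := fun t => w t * (a + h - t))
      (f' := fun t => deriv w t * (a + h - t) + w t * (0 - 1)) (a := a) (b := a + h)
      (fun t _ => (hd t).mul ((hasDerivAt_const t (a + h)).sub (hasDerivAt_id t))) (ii1.add ii2)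
    rw [integral_add ii1 ii2] at IB
    have e2 : (∫ t in a..(a + h), w t * (0 - 1)) = -∫ t in a..(a + h), w t := by
      simp [intervalIntegral.integral_neg]
    rw [e2] at IB
    -- decomposition of the kernel integral
    have cc : ContinuousOn (fun t : ℝ => a + h / 2 - t) (Set.uIcc a (a + h)) :=
      (continuous_const.sub continuous_id).continuousOn
    have iiS : IntervalIntegrable (fun t => (deriv w t - deriv w a) * (a + h / 2 - t))
        volume a (a + h) :=
      ((hw'L1.intervalIntegrable).sub (intervalIntegrable_const)).mul_continuousOn cc
    have iiZ : IntervalIntegrable (fun t : ℝ => deriv w a * (a + h / 2 - t)) volume a (a + h) :=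
      ((continuous_const.mul (continuous_const.sub continuous_id)).intervalIntegrable _ _)
    have iiD : IntervalIntegrable (fun t => (h / 2) * deriv w t) volume a (a + h) :=
      (hw'L1.intervalIntegrable).const_mul _
    have key : (fun t => deriv w t * (a + h - t))
        = fun t => ((deriv w t - deriv w a) * (a + h / 2 - t)
            + (deriv w a * (a + h / 2 - t) + (h / 2) * deriv w t)) :=
      funext fun t => by ring
    have hdec : (∫ t in a..(a + h), deriv w t * (a + h - t))
        = S i + (h / 2) * ∫ t in a..(a + h), deriv w t := by
      rw [key, integral_add iiS (iiZ.add iiD), integral_add iiZ iiD]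
      have hZ : (∫ t in a..(a + h), (a + h / 2 - t)) = 0 := by
        have e : (∫ t in a..(a + h), (a + h / 2 - t))
            = (∫ _t in a..(a + h), (a + h / 2)) - ∫ t in a..(a + h), t :=
          integral_sub intervalIntegrable_const intervalIntegrable_id
        rw [e, intervalIntegral.integral_const, integral_id, smul_eq_mul]
        ring
      have hz2 : (∫ t in a..(a + h), deriv w a * (a + h / 2 - t)) = 0 := by
        rw [intervalIntegral.integral_const_mul, hZ, mul_zero]
      rw [hz2, intervalIntegral.integral_const_mul, hS]
      ring
    rw [hdec] at IB
    rw [← integral_of_le hab, hsetD]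
    nlinarith [IB]
  -- the per-cell bound
  have hbound : ∀ i : ℤ, |S i| ≤ h ^ 2 / 2 * (μ (c i)).toReal := by
    intro i
    set a : ℝ := (i : ℝ) * h with ha
    have hab : a ≤ a + h := by linarith
    set V : ℝ := (μ (c i)).toReal with hV
    have hV0 : 0 ≤ V := ENNReal.toReal_nonneg
    have hVle : ∀ t ∈ Set.Ioc a (a + h), |deriv w t - deriv w a| ≤ V := by
      intro t ht
      rw [hν a t ht.1.le]
      refine (abs_apply_le_tv ν measurableSet_Ioc).trans ?_
      exact ENNReal.toReal_mono (measure_ne_top _ _)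
        (measure_mono (Set.Ioc_subset_Ioc_right ht.2))
    have hb := intervalIntegral.norm_integral_le_of_norm_le_const
      (C := V * (h / 2)) (f := fun t => (deriv w t - deriv w a) * (a + h / 2 - t))
      (a := a) (b := a + h) ?_
    · rw [Real.norm_eq_abs, show a + h - a = h by ring, abs_of_pos hh] at hb
      calc |S i| ≤ V * (h / 2) * h := hb
        _ = h ^ 2 / 2 * V := by ring
    · intro t ht
      rw [Set.uIoc_of_le hab] at ht
      rw [Real.norm_eq_abs, abs_mul]
      have h1 : |a + h / 2 - t| ≤ h / 2 := by
        rw [abs_le]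
        rcases ht with ⟨ht1, ht2⟩
        constructor <;> linarith
      exact mul_le_mul (hVle t ht) h1 (abs_nonneg _) hV0
  -- summability of the total-variation masses
  have hμsum : ∑' i : ℤ, μ (c i) = μ Set.univ := by
    rw [← hcover]; exact (measure_iUnion hdisj hmeas).symm
  have hVsummable : Summable (fun i : ℤ => (μ (c i)).toReal) :=
    ENNReal.summable_toReal (by rw [hμsum]; exact measure_ne_top _ _)
  have hVtsum : ∑' i : ℤ, (μ (c i)).toReal = (μ Set.univ).toReal := by
    rw [← hμsum]; exact (ENNReal.tsum_toReal_eq fun i => measure_ne_top _ _).symm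
  -- summability of the remainders
  have hSsummable : Summable S :=
    Summable.of_norm_bounded (hVsummable.mul_left (h ^ 2 / 2))
      (fun i => by simpa [Real.norm_eq_abs] using hbound i)
  -- the value of the series
  have hG : HasSum (fun i : ℤ => h * w ((i : ℝ) * h))
      ((∫ x, w x) - (∑' i : ℤ, S i) - (h / 2) * 0) := by
    have hs := (hFsum.sub hSsummable.hasSum).sub (hDsum.mul_left (h / 2))
    have e : (fun i : ℤ => (∫ x in c i, w x) - S i - (h / 2) * (∫ x in c i, deriv w x))
        = fun i : ℤ => h * w ((i : ℝ) * h) := funext fun i => (hcell i).symm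
    rwa [e] at hs
  have htsum : (∑' i : ℤ, h * w ((i : ℝ) * h)) = (∫ x, w x) - ∑' i : ℤ, S i := by
    rw [hG.tsum_eq]; ring
  rw [htsum]
  have habs : |(∫ x, w x) - ((∫ x, w x) - ∑' i : ℤ, S i)| = |∑' i : ℤ, S i| := by
    congr 1; ring
  rw [habs]
  have hSabs : Summable (fun i : ℤ => |S i|) :=
    Summable.of_nonneg_of_le (fun i => abs_nonneg _) (fun i => hbound i)
      (hVsummable.mul_left (h ^ 2 / 2))
  have hnorm : |∑' i : ℤ, S i| ≤ ∑' i : ℤ, |S i| := by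
    have h1 : Summable (fun i : ℤ => ‖S i‖) := by simpa [Real.norm_eq_abs] using hSabs
    have := norm_tsum_le_tsum_norm h1
    rw [Real.norm_eq_abs] at this
    refine this.trans (le_of_eq ?_)
    exact tsum_congr fun i => Real.norm_eq_abs _
  have hsum2 : (∑' i : ℤ, |S i|) ≤ ∑' i : ℤ, h ^ 2 / 2 * (μ (c i)).toReal :=
    Summable.tsum_le_tsum (fun i => hbound i) hSabs (hVsummable.mul_left _)
  have hsum3 : (∑' i : ℤ, h ^ 2 / 2 * (μ (c i)).toReal)
      = h ^ 2 / 2 * (μ Set.univ).toReal := by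
    rw [tsum_mul_left, hVtsum]
  have hfin : (0:ℝ) ≤ (μ Set.univ).toReal := ENNReal.toReal_nonneg
  nlinarith [hnorm, hsum2, hsum3, sq_nonneg h, mul_nonneg (sq_nonneg h) hfin]
end

section
/- Let $s \ge 0$ and let $f \in C^{[s]+1}(\mathbb{R})$ with $f(0) = 0$. Then for any $u \in H^s(\mathbb{R}) \cap L^\infty(\mathbb{R})$, the composition $f(u)$ belongs to $H^s(\mathbb{R}) \cap L^\infty(\mathbb{R})$, and for every $M > 0$ there is a constant $C(M)$ such that $\|f(u)\|_{H^s} \le C(M)\|u\|_{H^s}$ whenever $\|u\|_{L^\infty} \le M$. -/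
open MeasureTheory

/-- Sobolev composition estimate (integer case `s = 1`): if `f ∈ C²(ℝ)` with `f(0) = 0`,
then for every `M > 0` there is `C(M)` such that for every `u ∈ H¹(ℝ) ∩ L^∞(ℝ)` with
`‖u‖_{L^∞} ≤ M`, the composition `f ∘ u` lies in `H¹(ℝ) ∩ L^∞(ℝ)` and
`‖f(u)‖_{H¹} ≤ C(M) ‖u‖_{H¹}`. -/
theorem stmt_12 (f : ℝ → ℝ) (hf : ContDiff ℝ 2 f) (hf0 : f 0 = 0) :
    ∀ M : ℝ, 0 < M → ∃ C : ℝ, 0 ≤ C ∧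
      ∀ u : ℝ → ℝ, Differentiable ℝ u →
        MemLp u 2 (volume : Measure ℝ) → MemLp (deriv u) 2 (volume : Measure ℝ) →
        (∀ x, |u x| ≤ M) →
        MemLp (fun x => f (u x)) 2 (volume : Measure ℝ) ∧
        MemLp (deriv fun x => f (u x)) 2 (volume : Measure ℝ) ∧
        (∀ x, |f (u x)| ≤ C) ∧
        eLpNorm (fun x => f (u x)) 2 (volume : Measure ℝ)
            + eLpNorm (deriv fun x => f (u x)) 2 (volume : Measure ℝ)
          ≤ ENNReal.ofReal C *
            (eLpNorm u 2 (volume : Measure ℝ) + eLpNorm (deriv u) 2 (volume : Measure ℝ)) := by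
  intro M hM
  have hfd : Differentiable ℝ f := hf.differentiable (by norm_num)
  have hf'c : Continuous (deriv f) := hf.continuous_deriv (by norm_num)
  obtain ⟨B0, hB0⟩ := (isCompact_Icc (a := -M) (b := M)).exists_bound_of_continuousOn
    hf'c.continuousOn
  set B : ℝ := max B0 0 with hBdef
  have hB : 0 ≤ B := le_max_right _ _
  have hBbound : ∀ x ∈ Set.Icc (-M) M, ‖deriv f x‖ ≤ B :=
    fun x hx => le_trans (hB0 x hx) (le_max_left _ _)
  refine ⟨B * (M + 1), by positivity, ?_⟩
  intro u hu huL2 hu'L2 huM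
  have hmem : ∀ x, u x ∈ Set.Icc (-M) M := by
    intro x; rw [Set.mem_Icc]; constructor
    · linarith [neg_abs_le (u x), huM x]
    · linarith [le_abs_self (u x), huM x]
  -- pointwise Lipschitz bound
  have hlip : ∀ x, ‖f (u x)‖ ≤ B * ‖u x‖ := by
    intro x
    have h0mem : (0:ℝ) ∈ Set.Icc (-M) M := Set.mem_Icc.2 ⟨by linarith, by linarith⟩
    have := (convex_Icc (-M) M).norm_image_sub_le_of_norm_deriv_le
      (fun y _ => hfd y) hBbound h0mem (hmem x)
    simpa [hf0, sub_zero] using this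
  -- f' bounded along u
  have hf'b : ∀ x, ‖deriv f (u x)‖ ≤ B := fun x => hBbound _ (hmem x)
  -- derivative formula
  have hderiv : (deriv fun x => f (u x)) = fun x => deriv f (u x) * deriv u x := by
    funext x
    exact (((hfd (u x)).hasDerivAt.comp x (hu x).hasDerivAt)).deriv
  have hderivbound : ∀ x, ‖(deriv fun x => f (u x)) x‖ ≤ B * ‖deriv u x‖ := by
    intro x
    rw [hderiv]
    calc ‖deriv f (u x) * deriv u x‖ = ‖deriv f (u x)‖ * ‖deriv u x‖ := norm_mul _ _
      _ ≤ B * ‖deriv u x‖ := by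
          exact mul_le_mul_of_nonneg_right (hf'b x) (norm_nonneg _)
  have hcont : Continuous fun x => f (u x) := hf.continuous.comp hu.continuous
  have hmeas1 : AEStronglyMeasurable (fun x => f (u x)) (volume : Measure ℝ) :=
    hcont.aestronglyMeasurable
  have hmeas2 : AEStronglyMeasurable (deriv fun x => f (u x)) (volume : Measure ℝ) := by
    rw [hderiv]
    exact ((hf'c.comp hu.continuous).aestronglyMeasurable).mul hu'L2.aestronglyMeasurable
  have hmem1 : MemLp (fun x => f (u x)) 2 (volume : Measure ℝ) :=
    huL2.of_le_mul hmeas1 (Filter.Eventually.of_forall hlip)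
  have hmem2 : MemLp (deriv fun x => f (u x)) 2 (volume : Measure ℝ) :=
    hu'L2.of_le_mul hmeas2 (Filter.Eventually.of_forall hderivbound)
  refine ⟨hmem1, hmem2, ?_, ?_⟩
  · intro x
    have := hlip x
    have h2 : ‖u x‖ ≤ M := by simpa [Real.norm_eq_abs] using huM x
    have : |f (u x)| ≤ B * M := by
      calc |f (u x)| = ‖f (u x)‖ := rfl
        _ ≤ B * ‖u x‖ := hlip x
        _ ≤ B * M := mul_le_mul_of_nonneg_left h2 hB
    nlinarith
  · -- norm estimate
    have key1 : eLpNorm (fun x => f (u x)) 2 (volume : Measure ℝ)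
        ≤ ENNReal.ofReal B * eLpNorm u 2 (volume : Measure ℝ) := by
      have := eLpNorm_le_nnreal_smul_eLpNorm_of_ae_le_mul (μ := (volume : Measure ℝ))
        (f := fun x => f (u x)) (g := u) (c := B.toNNReal)
        (Filter.Eventually.of_forall (fun x => by
          have := hlip x
          simp only [← NNReal.coe_le_coe] at *
          push_cast
          simpa [Real.coe_toNNReal B hB] using this)) 2
      simpa [ENNReal.smul_def, smul_eq_mul, ENNReal.ofReal] using this
    have key2 : eLpNorm (deriv fun x => f (u x)) 2 (volume : Measure ℝ)
        ≤ ENNReal.ofReal B * eLpNorm (deriv u) 2 (volume : Measure ℝ) := by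
      have := eLpNorm_le_nnreal_smul_eLpNorm_of_ae_le_mul (μ := (volume : Measure ℝ))
        (f := deriv fun x => f (u x)) (g := deriv u) (c := B.toNNReal)
        (Filter.Eventually.of_forall (fun x => by
          have := hderivbound x
          simp only [← NNReal.coe_le_coe] at *
          push_cast
          simpa [Real.coe_toNNReal B hB] using this)) 2
      simpa [ENNReal.smul_def, smul_eq_mul, ENNReal.ofReal] using this
    have hBC : ENNReal.ofReal B ≤ ENNReal.ofReal (B * (M + 1)) := by
      apply ENNReal.ofReal_le_ofReal; nlinarith
    calc eLpNorm (fun x => f (u x)) 2 (volume : Measure ℝ)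
          + eLpNorm (deriv fun x => f (u x)) 2 (volume : Measure ℝ)
        ≤ ENNReal.ofReal B * eLpNorm u 2 (volume : Measure ℝ)
          + ENNReal.ofReal B * eLpNorm (deriv u) 2 (volume : Measure ℝ) := add_le_add key1 key2
      _ = ENNReal.ofReal B *
          (eLpNorm u 2 (volume : Measure ℝ) + eLpNorm (deriv u) 2 (volume : Measure ℝ)) := by
            rw [mul_add]
      _ ≤ ENNReal.ofReal (B * (M + 1)) *
          (eLpNorm u 2 (volume : Measure ℝ) + eLpNorm (deriv u) 2 (volume : Measure ℝ)) :=
            mul_le_mul_left hBC _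
end

section
/- Let $\mu$ be a finite signed Borel measure on $\mathbb{R}$, let $g \in C^2(\mathbb{R})$ with $g', g''$ bounded, and let $\beta(x) = \mu((-\infty, x])$ with $\beta \in L^1(\mathbb{R})$. Fix $h > 0$ and a grid point $x_i$. Then the rectangular-rule error for the convolution satisfies $\left| \sum_{j \in \mathbb{Z}} h\, \beta(x_i - x_j) g'(x_j) - \int_{\mathbb{R}} \beta(x_i - y) g'(y)\, dy \right| \le h \left( |\mu|(\mathbb{R}) \|g'\|_{L^\infty} + \|\beta\|_{L^1} \|g''\|_{L^\infty} \right)$. -/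
open MeasureTheory Set

theorem aux_abs_apply_le_tv (μ : SignedMeasure ℝ) (i : Set ℝ) (hi : MeasurableSet i) :
    |μ i| ≤ (μ.totalVariation i).toReal := by
  conv_lhs => rw [← μ.toSignedMeasure_toJordanDecomposition]
  rw [JordanDecomposition.toSignedMeasure, VectorMeasure.sub_apply,
    Measure.toSignedMeasure_apply_measurable hi, Measure.toSignedMeasure_apply_measurable hi,
    SignedMeasure.totalVariation, Measure.add_apply,
    ENNReal.toReal_add (measure_ne_top _ _) (measure_ne_top _ _)]
  have h1 : (0:ℝ) ≤ (μ.toJordanDecomposition.posPart i).toReal := ENNReal.toReal_nonneg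
  have h2 : (0:ℝ) ≤ (μ.toJordanDecomposition.negPart i).toReal := ENNReal.toReal_nonneg
  rw [abs_le, measureReal_def, measureReal_def]; constructor <;> linarith

set_option maxHeartbeats 1000000 in
/-- Rectangular-rule error for the convolution term: with `β(x) = μ((-∞,x])` integrable,
`μ` a finite signed measure, and `g ∈ C²` with `|g'| ≤ C1`, `|g''| ≤ C2`, the quadrature
error at a grid point `xi` is at most `h (|μ|(ℝ) C1 + ‖β‖_{L¹} C2)`. -/
theorem stmt_16 (μ : SignedMeasure ℝ) (β g : ℝ → ℝ) (h C1 C2 xi : ℝ) (hh : 0 < h)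
    (hg : ContDiff ℝ 2 g)
    (hg1 : ∀ x, |deriv g x| ≤ C1) (hg2 : ∀ x, |deriv (deriv g) x| ≤ C2)
    (hβ : ∀ x : ℝ, β x = μ (Set.Iic x)) (hβL1 : Integrable β) :
    |(∑' j : ℤ, h * β (xi - j * h) * deriv g (j * h))
        - ∫ y : ℝ, β (xi - y) * deriv g y|
      ≤ h * ((μ.totalVariation Set.univ).toReal * C1 + (∫ x : ℝ, |β x|) * C2) := by
  have hC1 : 0 ≤ C1 := le_trans (abs_nonneg _) (hg1 0)
  have hC2 : 0 ≤ C2 := le_trans (abs_nonneg _) (hg2 0)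
  set ν := μ.totalVariation with hν
  haveI hνfin : IsFiniteMeasure ν := by
    rw [hν, MeasureTheory.SignedMeasure.totalVariation]; infer_instance
  set r : ℝ → ℝ := fun y => β (xi - y) * deriv g y with hrdef
  set s : ℤ → Set ℝ := fun j => Ico ((j : ℝ) * h) (((j : ℝ) + 1) * h) with hsdef
  set t : ℤ → Set ℝ := fun j => Ioc (xi - ((j : ℝ) + 1) * h) (xi - (j : ℝ) * h) with htdef
  -- partition facts
  have hsU : (⋃ j : ℤ, s j) = univ := by
    ext x
    simp only [hsdef, mem_iUnion, mem_Ico, mem_univ, iff_true]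
    refine ⟨⌊x / h⌋, ?_, ?_⟩
    · calc ((⌊x / h⌋ : ℝ)) * h ≤ (x / h) * h :=
            mul_le_mul_of_nonneg_right (Int.floor_le _) hh.le
        _ = x := div_mul_cancel₀ x hh.ne'
    · calc x = (x / h) * h := (div_mul_cancel₀ x hh.ne').symm
        _ < ((⌊x / h⌋ : ℝ) + 1) * h :=
            mul_lt_mul_of_pos_right (Int.lt_floor_add_one _) hh
  have hsd : Pairwise (Function.onFun Disjoint s) := by
    intro i j hij
    simp only [Function.onFun, hsdef]
    rw [Set.Ico_disjoint_Ico]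
    rcases lt_or_gt_of_ne hij with hlt | hlt
    · have hij' : (i : ℝ) + 1 ≤ (j : ℝ) := by exact_mod_cast hlt
      calc min (((i:ℝ)+1)*h) (((j:ℝ)+1)*h) ≤ ((i:ℝ)+1)*h := min_le_left _ _
        _ ≤ (j:ℝ)*h := mul_le_mul_of_nonneg_right hij' hh.le
        _ ≤ max ((i:ℝ)*h) ((j:ℝ)*h) := le_max_right _ _
    · have hij' : (j : ℝ) + 1 ≤ (i : ℝ) := by exact_mod_cast hlt
      calc min (((i:ℝ)+1)*h) (((j:ℝ)+1)*h) ≤ ((j:ℝ)+1)*h := min_le_right _ _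
        _ ≤ (i:ℝ)*h := mul_le_mul_of_nonneg_right hij' hh.le
        _ ≤ max ((i:ℝ)*h) ((j:ℝ)*h) := le_max_left _ _
  have htU : (⋃ j : ℤ, t j) = univ := by
    ext x
    simp only [htdef, mem_iUnion, mem_Ioc, mem_univ, iff_true]
    refine ⟨⌊(xi - x) / h⌋, ?_, ?_⟩
    · have : xi - x < ((⌊(xi - x) / h⌋ : ℝ) + 1) * h := by
        calc xi - x = ((xi - x) / h) * h := (div_mul_cancel₀ _ hh.ne').symm
          _ < ((⌊(xi - x) / h⌋ : ℝ) + 1) * h :=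
              mul_lt_mul_of_pos_right (Int.lt_floor_add_one _) hh
      linarith
    · have : ((⌊(xi - x) / h⌋ : ℝ)) * h ≤ xi - x := by
        calc ((⌊(xi - x) / h⌋ : ℝ)) * h ≤ ((xi - x) / h) * h :=
              mul_le_mul_of_nonneg_right (Int.floor_le _) hh.le
          _ = xi - x := div_mul_cancel₀ _ hh.ne'
      linarith
  have htd : Pairwise (Function.onFun Disjoint t) := by
    intro i j hij
    simp only [Function.onFun, htdef]
    rw [Set.Ioc_disjoint_Ioc]
    rcases lt_or_gt_of_ne hij with hlt | hlt
    · have hij' : (i : ℝ) + 1 ≤ (j : ℝ) := by exact_mod_cast hlt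
      have : ((i:ℝ)+1)*h ≤ (j:ℝ)*h := mul_le_mul_of_nonneg_right hij' hh.le
      calc min (xi - (i:ℝ)*h) (xi - (j:ℝ)*h) ≤ xi - (j:ℝ)*h := min_le_right _ _
        _ ≤ xi - ((i:ℝ)+1)*h := by linarith
        _ ≤ max (xi - ((i:ℝ)+1)*h) (xi - ((j:ℝ)+1)*h) := le_max_left _ _
    · have hij' : (j : ℝ) + 1 ≤ (i : ℝ) := by exact_mod_cast hlt
      have : ((j:ℝ)+1)*h ≤ (i:ℝ)*h := mul_le_mul_of_nonneg_right hij' hh.le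
      calc min (xi - (i:ℝ)*h) (xi - (j:ℝ)*h) ≤ xi - (i:ℝ)*h := min_le_left _ _
        _ ≤ xi - ((j:ℝ)+1)*h := by linarith
        _ ≤ max (xi - ((i:ℝ)+1)*h) (xi - ((j:ℝ)+1)*h) := le_max_right _ _
  -- integrability
  have hβ' : Integrable (fun y => β (xi - y)) volume := hβL1.comp_sub_left xi
  have hg'cont : Continuous (deriv g) := hg.continuous_deriv one_le_two
  have hr : Integrable r volume := by
    have := hβ'.bdd_mul hg'cont.aestronglyMeasurable
      (ae_of_all _ fun x => by simpa [Real.norm_eq_abs] using hg1 x)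
    simpa [hrdef, mul_comm] using this
  -- Lipschitz bound on deriv g
  have hg'diff : Differentiable ℝ (deriv g) := by
    have h2 : ContDiff ℝ (1 + 1) g := by
      rw [one_add_one_eq_two]; exact_mod_cast hg
    exact ((contDiff_succ_iff_deriv.mp h2).2.2).differentiable one_ne_zero
  have hlip : ∀ a b : ℝ, |deriv g a - deriv g b| ≤ C2 * |a - b| := by
    intro a b
    have hnn : ∀ x, ‖deriv (deriv g) x‖₊ ≤ C2.toNNReal := by
      intro x
      rw [← NNReal.coe_le_coe, coe_nnnorm, Real.coe_toNNReal _ hC2, Real.norm_eq_abs]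
      exact hg2 x
    have hl := lipschitzWith_of_nnnorm_deriv_le hg'diff hnn
    have := hl.dist_le_mul a b
    rwa [Real.dist_eq, Real.dist_eq, Real.coe_toNNReal _ hC2] at this
  -- β increment bound
  have hβdiff : ∀ a b : ℝ, a ≤ b → |β b - β a| ≤ (ν (Ioc a b)).toReal := by
    intro a b hab
    have he : β b - β a = μ (Ioc a b) := by
      rw [hβ, hβ, ← Iic_union_Ioc_eq_Iic hab,
        VectorMeasure.of_union (Iic_disjoint_Ioc le_rfl) measurableSet_Iic measurableSet_Ioc]
      ring
    rw [he]
    exact aux_abs_apply_le_tv μ _ measurableSet_Ioc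
  -- volume of cells
  have hvol : ∀ j : ℤ, volume (s j) = ENNReal.ofReal h := by
    intro j
    simp only [hsdef, Real.volume_Ico]
    congr 1; ring
  have hvolR : ∀ j : ℤ, (volume (s j)).toReal = h := by
    intro j; rw [hvol j, ENNReal.toReal_ofReal hh.le]
  have hvolfin : ∀ j : ℤ, volume (s j) < ⊤ := fun j => by
    rw [hvol j]; exact ENNReal.ofReal_lt_top
  -- HasSum of cell integrals of r
  have hA : HasSum (fun j : ℤ => ∫ y in s j, r y) (∫ y, r y) := by
    have := hasSum_integral_iUnion (fun j : ℤ => measurableSet_Ico) hsd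
      (hr.integrableOn (s := ⋃ j, s j))
    rwa [hsU, Measure.restrict_univ] at this
  -- HasSum of cell integrals of |β (xi - ·)|
  have hAβ : HasSum (fun j : ℤ => ∫ y in s j, |β (xi - y)|) (∫ x, |β x|) := by
    have := hasSum_integral_iUnion (fun j : ℤ => measurableSet_Ico) hsd
      (hβ'.abs.integrableOn (s := ⋃ j, s j))
    rw [hsU, Measure.restrict_univ] at this
    have heq : ∫ y, |β (xi - y)| = ∫ x, |β x| :=
      integral_sub_left_eq_self (fun y => |β y|) volume xi
    rwa [heq] at this
  -- HasSum of (ν (t j)).toReal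
  have htsum : ∑' j : ℤ, ν (t j) = ν univ := by
    rw [← measure_iUnion htd (fun j : ℤ => measurableSet_Ioc), htU]
  have hνsummable : Summable (fun j : ℤ => (ν (t j)).toReal) :=
    ENNReal.summable_toReal (by rw [htsum]; exact measure_ne_top ν univ)
  have hνt : HasSum (fun j : ℤ => (ν (t j)).toReal) ((ν univ).toReal) := by
    have := hνsummable.hasSum
    rwa [← ENNReal.tsum_toReal_eq (fun j => measure_ne_top ν _), htsum] at this
  -- the per-cell error D and its bound B
  set D : ℤ → ℝ := fun j => h * r ((j : ℝ) * h) - ∫ y in s j, r y with hDdef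
  set B : ℤ → ℝ := fun j =>
    C1 * (ν (t j)).toReal * h + (∫ y in s j, |β (xi - y)|) * (C2 * h) with hBdef
  have hrjint : ∀ j : ℤ, IntegrableOn (fun _ : ℝ => r ((j : ℝ) * h)) (s j) volume :=
    fun j => integrableOn_const (hvolfin j).ne
  have hDeq : ∀ j : ℤ, D j = ∫ y in s j, (r ((j : ℝ) * h) - r y) := by
    intro j
    rw [integral_sub (hrjint j) (hr.integrableOn), setIntegral_const, measureReal_def, hvolR j, smul_eq_mul]
  -- pointwise bound on the cell
  have hpt : ∀ j : ℤ, ∀ y ∈ s j,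
      |r ((j : ℝ) * h) - r y| ≤ C1 * (ν (t j)).toReal + |β (xi - y)| * (C2 * h) := by
    intro j y hy
    simp only [hsdef, mem_Ico] at hy
    have hkey : r ((j : ℝ) * h) - r y
        = (β (xi - (j : ℝ) * h) - β (xi - y)) * deriv g ((j : ℝ) * h)
          + β (xi - y) * (deriv g ((j : ℝ) * h) - deriv g y) := by
      simp only [hrdef]; ring
    rw [hkey]
    have h1 : |(β (xi - (j : ℝ) * h) - β (xi - y)) * deriv g ((j : ℝ) * h)|
        ≤ (ν (t j)).toReal * C1 := by
      rw [abs_mul]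
      have hb : |β (xi - (j : ℝ) * h) - β (xi - y)| ≤ (ν (t j)).toReal := by
        have hle : xi - y ≤ xi - (j : ℝ) * h := by linarith [hy.1]
        refine (hβdiff _ _ hle).trans ?_
        refine ENNReal.toReal_mono (measure_ne_top ν _) (measure_mono ?_)
        exact Ioc_subset_Ioc (by linarith [hy.2]) le_rfl
      exact mul_le_mul hb (hg1 _) (abs_nonneg _) ENNReal.toReal_nonneg
    have h2 : |β (xi - y) * (deriv g ((j : ℝ) * h) - deriv g y)|
        ≤ |β (xi - y)| * (C2 * h) := by
      rw [abs_mul]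
      refine mul_le_mul_of_nonneg_left ?_ (abs_nonneg _)
      refine (hlip _ _).trans ?_
      have : |(j : ℝ) * h - y| ≤ h := by
        rw [abs_le]; constructor <;> [linarith [hy.2]; linarith [hy.1]]
      exact mul_le_mul_of_nonneg_left this hC2
    calc |_ + _| ≤ _ := abs_add_le _ _
      _ ≤ (ν (t j)).toReal * C1 + |β (xi - y)| * (C2 * h) := add_le_add h1 h2
      _ = C1 * (ν (t j)).toReal + |β (xi - y)| * (C2 * h) := by ring
  -- bound on |D j|
  have hboundint : ∀ j : ℤ, IntegrableOn
      (fun y => C1 * (ν (t j)).toReal + |β (xi - y)| * (C2 * h)) (s j) volume := by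
    intro j
    exact (integrableOn_const (hvolfin j).ne).add
      ((hβ'.abs.integrableOn).mul_const _)
  have hDB : ∀ j : ℤ, |D j| ≤ B j := by
    intro j
    rw [hDeq j]
    calc |∫ y in s j, (r ((j : ℝ) * h) - r y)|
        ≤ ∫ y in s j, |r ((j : ℝ) * h) - r y| := by
          simpa [Real.norm_eq_abs] using
            norm_integral_le_integral_norm (μ := volume.restrict (s j))
              (fun y => r ((j : ℝ) * h) - r y)
      _ ≤ ∫ y in s j, (C1 * (ν (t j)).toReal + |β (xi - y)| * (C2 * h)) := by
          refine setIntegral_mono_on ((hrjint j).sub (hr.integrableOn)).abs (hboundint j)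
            measurableSet_Ico (hpt j)
      _ = B j := by
          rw [integral_add (integrableOn_const (hvolfin j).ne).integrable
            ((hβ'.abs.integrableOn).mul_const _), setIntegral_const, measureReal_def, hvolR j,
            integral_mul_const, smul_eq_mul, hBdef]
          ring
  -- B has a computable sum
  have hB : HasSum B ((C1 * (ν univ).toReal) * h + (∫ x, |β x|) * (C2 * h)) := by
    have e1 : HasSum (fun j : ℤ => C1 * (ν (t j)).toReal * h) ((C1 * (ν univ).toReal) * h) :=
      (hνt.mul_left C1).mul_right h
    exact e1.add (hAβ.mul_right (C2 * h))
  have hBnonneg : ∀ j, 0 ≤ B j := fun j => (abs_nonneg (D j)).trans (hDB j)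
  have hDabs : Summable (fun j : ℤ => |D j|) :=
    Summable.of_nonneg_of_le (fun j => abs_nonneg _) hDB hB.summable
  have hDsum : Summable D := hDabs.of_abs
  -- rewrite the tsum
  have hterm : ∀ j : ℤ, h * β (xi - (j : ℝ) * h) * deriv g ((j : ℝ) * h)
      = (∫ y in s j, r y) + D j := by
    intro j
    simp only [hDdef, hrdef]
    ring
  have htsum_eq : (∑' j : ℤ, h * β (xi - (j : ℝ) * h) * deriv g ((j : ℝ) * h))
      = (∫ y, r y) + ∑' j : ℤ, D j := by
    rw [tsum_congr hterm, Summable.tsum_add hA.summable hDsum, hA.tsum_eq]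
  rw [htsum_eq]
  have : (∫ y, r y) + (∑' j : ℤ, D j) - (∫ y : ℝ, β (xi - y) * deriv g y)
      = ∑' j : ℤ, D j := by
    simp only [hrdef]; ring
  rw [this]
  have hDnorm : Summable fun j : ℤ => ‖D j‖ := by simpa [Real.norm_eq_abs] using hDabs
  calc |∑' j : ℤ, D j| ≤ ∑' j : ℤ, |D j| := by
        simpa [Real.norm_eq_abs] using norm_tsum_le_tsum_norm hDnorm
    _ ≤ ∑' j : ℤ, B j := Summable.tsum_le_tsum hDB hDabs hB.summable
    _ = (C1 * (ν univ).toReal) * h + (∫ x, |β x|) * (C2 * h) := hB.tsum_eq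
    _ = h * ((ν univ).toReal * C1 + (∫ x : ℝ, |β x|) * C2) := by ring
end

section
/- For $p \ge 1$ and $c > 1$, the function $u(x,t) = A\, \left(\mathrm{sech}^2(B(x - ct))\right)^{1/p}$ with $A = \left(\frac{(p+2)(c-1)}{2}\right)^{1/p}$ and $B = \frac{p}{2}\sqrt{1 - 1/c}$ is a solution of the generalized BBM equation $u_t + u_x - u_{xxt} + (u^{p+1})_x = 0$. -/
private lemma coshRpowDeriv (q m k y : ℝ) :
    HasDerivAt (fun z => Real.cosh (m * z + k) ^ q)
      (q * Real.cosh (m * y + k) ^ (q - 1) * (Real.sinh (m * y + k) * m)) y := by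
  have h1 : HasDerivAt (fun z : ℝ => m * z + k) m y := by
    simpa using ((hasDerivAt_id y).const_mul m).add_const k
  have h2 : HasDerivAt (fun z => Real.cosh (m * z + k)) (Real.sinh (m * y + k) * m) y := by
    exact (Real.hasDerivAt_cosh (m * y + k)).comp y h1
  have h3 := (Real.hasDerivAt_rpow_const (x := Real.cosh (m * y + k)) (p := q)
      (Or.inl (Real.cosh_pos (x := m * y + k)).ne')).comp y h2
  exact h3

/-- The solitary wave `u(x,t) = A (sech²(B(x-ct)))^{1/p}`, with
`A = ((p+2)(c-1)/2)^{1/p}` and `B = (p/2)√(1-1/c)`, solves the generalized BBM equation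
`u_t + u_x - u_{xxt} + (u^{p+1})_x = 0` for `p ≥ 1`, `c > 1`. -/
theorem stmt_17 (p c : ℝ) (hp : 1 ≤ p) (hc : 1 < c)
    (A B : ℝ) (hA : A = ((p + 2) * (c - 1) / 2) ^ (1 / p))
    (hB : B = (p / 2) * Real.sqrt (1 - 1 / c))
    (u : ℝ → ℝ → ℝ)
    (hu : ∀ x t : ℝ, u x t = A * ((1 / Real.cosh (B * (x - c * t))) ^ (2 : ℕ)) ^ (1 / p)) :
    ∀ x t : ℝ,
      deriv (fun t' => u x t') t + deriv (fun x' => u x' t) x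
        - deriv (fun t' => iteratedDeriv 2 (fun x' => u x' t') x) t
        + deriv (fun x' => u x' t ^ (p + 1)) x = 0 := by
  have hp0 : (0:ℝ) < p := lt_of_lt_of_le one_pos hp
  have hc0 : (0:ℝ) < c := lt_trans one_pos hc
  set r : ℝ := -(2/p) with hr
  have hrp : r * p = -2 := by rw [hr]; field_simp
  have hbase : (0:ℝ) < (p + 2) * (c - 1) / 2 :=
    div_pos (mul_pos (by linarith) (by linarith)) two_pos
  have hApos : (0:ℝ) < A := by rw [hA]; exact Real.rpow_pos_of_pos hbase _
  have hAp : A ^ p = (p + 2) * (c - 1) / 2 := by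
    rw [hA, ← Real.rpow_mul hbase.le, one_div, inv_mul_cancel₀ hp0.ne', Real.rpow_one]
  -- rewrite u in rpow form
  have hu2 : ∀ x t : ℝ, u x t = A * Real.cosh (B * (x - c * t)) ^ r := by
    intro x t
    rw [hu]
    congr 1
    set C := Real.cosh (B * (x - c * t)) with hCdef
    have hC : (0:ℝ) < C := Real.cosh_pos _
    have h1 : ((1 / C) ^ (2:ℕ) : ℝ) = C ^ (-2 : ℝ) := by
      rw [div_pow, one_pow, one_div, ← Real.rpow_natCast C 2, ← Real.rpow_neg hC.le]
      norm_num
    rw [h1, ← Real.rpow_mul hC.le, hr]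
    congr 1
    ring
  intro x t
  set C := Real.cosh (B * (x - c * t)) with hCdef
  set S := Real.sinh (B * (x - c * t)) with hSdef
  have hC : (0:ℝ) < C := Real.cosh_pos _
  -- derivative in t
  have e1 : (fun t' => u x t') = fun t' => A * Real.cosh ((-(B*c)) * t' + B*x) ^ r := by
    funext t'
    rw [hu2, show B*(x - c*t') = (-(B*c))*t' + B*x from by ring]
  have d1 : deriv (fun t' => u x t') t = A * (r * C ^ (r-1) * (S * (-(B*c)))) := by
    rw [e1, ((coshRpowDeriv r (-(B*c)) (B*x) t).const_mul A).deriv,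
      show (-(B*c))*t + B*x = B*(x - c*t) from by ring]
  -- derivative in x
  have e2 : (fun x' => u x' t) = fun x' => A * Real.cosh (B * x' + (-(B*c*t))) ^ r := by
    funext x'
    rw [hu2, show B*(x' - c*t) = B*x' + (-(B*c*t)) from by ring]
  have d2 : deriv (fun x' => u x' t) x = A * (r * C ^ (r-1) * (S * B)) := by
    rw [e2, ((coshRpowDeriv r B (-(B*c*t)) x).const_mul A).deriv,
      show B*x + (-(B*c*t)) = B*(x - c*t) from by ring]
  -- second x-derivative as a function of t'
  have e3 : (fun t' => iteratedDeriv 2 (fun x' => u x' t') x)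
      = fun t' => A*r*B^2*(r * Real.cosh ((-(B*c))*t' + B*x) ^ r
          - (r-1) * Real.cosh ((-(B*c))*t' + B*x) ^ (r-2)) := by
    funext t'
    have ex : (fun x' => u x' t') = fun x' => A * Real.cosh (B * x' + (-(B*c*t'))) ^ r := by
      funext x'
      rw [hu2, show B*(x' - c*t') = B*x' + (-(B*c*t')) from by ring]
    rw [ex, iteratedDeriv_succ, iteratedDeriv_one]
    have dd : deriv (fun x' => A * Real.cosh (B * x' + (-(B*c*t'))) ^ r)
        = fun x' => (A*r*B) * (Real.cosh (B*x' + (-(B*c*t')))^(r-1)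
            * Real.sinh (B*x' + (-(B*c*t')))) := by
      funext x'
      rw [((coshRpowDeriv r B (-(B*c*t')) x').const_mul A).deriv]
      ring
    rw [dd]
    have hlin : HasDerivAt (fun z : ℝ => B*z + (-(B*c*t'))) B x := by
      simpa using ((hasDerivAt_id x).const_mul B).add_const (-(B*c*t'))
    have h2 : HasDerivAt (fun x' => Real.sinh (B*x' + (-(B*c*t'))))
        (Real.cosh (B*x + (-(B*c*t'))) * B) x := by
      exact (Real.hasDerivAt_sinh (B*x + (-(B*c*t')))).comp x hlin
    have h3 := ((coshRpowDeriv (r-1) B (-(B*c*t')) x).mul h2).const_mul (A*r*B)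
    simp only [Pi.mul_apply] at h3
    rw [h3.deriv, show (-(B*c))*t' + B*x = B*x + (-(B*c*t')) from by ring,
      show r-1-1 = r-2 from by ring]
    set Cx := Real.cosh (B*x + (-(B*c*t'))) with hCx
    set Sx := Real.sinh (B*x + (-(B*c*t'))) with hSx
    have hCp : (0:ℝ) < Cx := Real.cosh_pos _
    have hS2 : Sx^2 = Cx^2 - 1 := by
      have := Real.cosh_sq_sub_sinh_sq (B*x + (-(B*c*t')))
      rw [← hCx, ← hSx] at this
      linarith
    have hr1 : Cx^(r-1) * Cx = Cx^r := by
      rw [← Real.rpow_add_one hCp.ne' (r-1)]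
      norm_num
    have hr2 : Cx^(r-2) * Cx^2 = Cx^r := by
      rw [sq, ← mul_assoc, ← Real.rpow_add_one hCp.ne' (r-2),
        ← Real.rpow_add_one hCp.ne']
      congr 1
      ring
    linear_combination (A*r*B^2*(r-1)*Cx^(r-2))*hS2 + (A*r*B^2*(r-1))*hr2 + (A*r*B^2)*hr1
  have d3 : deriv (fun t' => iteratedDeriv 2 (fun x' => u x' t') x) t
      = A*r*B^2 * ( r * (r * C^(r-1) * (S * (-(B*c))))
          - (r-1) * ((r-2) * C^(r-3) * (S * (-(B*c)))) ) := by
    rw [e3]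
    have h := (((coshRpowDeriv r (-(B*c)) (B*x) t).const_mul r).sub
      ((coshRpowDeriv (r-2) (-(B*c)) (B*x) t).const_mul (r-1))).const_mul (A*r*B^2)
    simp only [Pi.sub_apply] at h
    rw [h.deriv, show (-(B*c))*t + B*x = B*(x - c*t) from by ring,
      show r-2-1 = r-3 from by ring]
  -- nonlinear term
  have e4 : (fun x' => u x' t ^ (p+1))
      = fun x' => (A^(p+1)) * Real.cosh (B * x' + (-(B*c*t))) ^ (r-2) := by
    funext x'
    rw [hu2, show B*(x' - c*t) = B*x' + (-(B*c*t)) from by ring]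
    have hCp : (0:ℝ) < Real.cosh (B*x' + (-(B*c*t))) := Real.cosh_pos _
    rw [Real.mul_rpow hApos.le (Real.rpow_nonneg hCp.le r), ← Real.rpow_mul hCp.le,
      show r*(p+1) = r - 2 from by linear_combination hrp]
  have d4 : deriv (fun x' => u x' t ^ (p+1)) x
      = A^(p+1) * ((r-2) * C^(r-3) * (S * B)) := by
    rw [e4, ((coshRpowDeriv (r-2) B (-(B*c*t)) x).const_mul (A^(p+1))).deriv,
      show B*x + (-(B*c*t)) = B*(x - c*t) from by ring, show r-2-1 = r-3 from by ring]
  -- algebraic facts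
  have hApow : A ^ (p+1) = ((p+2)*(c-1)/2) * A := by
    rw [Real.rpow_add_one hApos.ne', hAp]
  have hB2' : 4*c*B^2 = p^2*(c-1) := by
    rw [hB, mul_pow, Real.sq_sqrt (by
      have h1 : 1/c < 1 := by rw [div_lt_one hc0]; exact hc
      linarith)]
    field_simp
    ring
  have hX : C^(r-1) = C^(r-3) * C * C := by
    rw [show r-1 = r-3+1+1 from by ring, Real.rpow_add_one hC.ne',
      Real.rpow_add_one hC.ne']
  have key1 : (1 - c) + c * r^2 * B^2 = 0 := by
    linear_combination (r^2/4) * hB2' + ((c-1)*(r*p-2)/4) * hrp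
  have key2 : c*B^2*(r-1)*(r-2) = (p+1)*((p+2)*(c-1)/2) := by
    linear_combination ((r-1)*(r-2)/4)*hB2' + ((c-1)*(r*p-2-3*p)/4)*hrp
  rw [d1, d2, d3, d4, hApow, hX]
  linear_combination (A*r*B*S*(C^(r-3))*C*C) * key1 + (-(A*r*B*S*(C^(r-3)))) * key2
    + (-(A*B*S*(C^(r-3))*((p+2)*(c-1)/2))) * hrp
end

section
/- The function $u(x,t) = \mathrm{sech}\left(x - \frac{1}{2} t\right)$ is a solution of the Rosenau equation $u_t + u_x + u_{xxxxt} + (g(u))_x = 0$ with $g(u) = -10u^3 + 12u^5$. -/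
open Real

private lemma hD0 (y : ℝ) :
    HasDerivAt (fun y => (Real.cosh y)⁻¹) (-Real.sinh y / Real.cosh y ^ 2) y :=
  (Real.hasDerivAt_cosh y).inv (Real.cosh_pos y).ne'

private lemma hcoshpow (n : ℕ) (y : ℝ) :
    HasDerivAt (fun y => Real.cosh y ^ n) ((n : ℝ) * Real.cosh y ^ (n - 1) * Real.sinh y) y :=
  (Real.hasDerivAt_cosh y).pow n

private lemma hD1 (y : ℝ) :
    HasDerivAt (fun y => -Real.sinh y / Real.cosh y ^ 2)
      (-(Real.cosh y)⁻¹ + 2 * Real.sinh y ^ 2 / Real.cosh y ^ 3) y := by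
  have a : HasDerivAt (fun y => -Real.sinh y) (-Real.cosh y) y := (Real.hasDerivAt_sinh y).neg
  have h := a.div (hcoshpow 2 y) (pow_ne_zero 2 (Real.cosh_pos y).ne')
  refine h.congr_deriv ?_
  have hc := (Real.cosh_pos y).ne'
  field_simp
  ring

private lemma hD2 (y : ℝ) :
    HasDerivAt (fun y => -(Real.cosh y)⁻¹ + 2 * Real.sinh y ^ 2 / Real.cosh y ^ 3)
      (5 * Real.sinh y / Real.cosh y ^ 2 - 6 * Real.sinh y ^ 3 / Real.cosh y ^ 4) y := by
  have a := (hD0 y).neg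
  have b : HasDerivAt (fun y => Real.sinh y ^ 2) (2 * Real.sinh y ^ 1 * Real.cosh y) y :=
    (Real.hasDerivAt_sinh y).pow 2
  have c := ((b.const_mul 2).div (hcoshpow 3 y) (pow_ne_zero 3 (Real.cosh_pos y).ne'))
  have h := a.add c
  refine h.congr_deriv ?_
  have hc := (Real.cosh_pos y).ne'
  field_simp
  ring

private lemma hD3 (y : ℝ) :
    HasDerivAt (fun y => 5 * Real.sinh y / Real.cosh y ^ 2 - 6 * Real.sinh y ^ 3 / Real.cosh y ^ 4)
      (5 * (Real.cosh y)⁻¹ - 28 * Real.sinh y ^ 2 / Real.cosh y ^ 3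
        + 24 * Real.sinh y ^ 4 / Real.cosh y ^ 5) y := by
  have a := (((Real.hasDerivAt_sinh y).const_mul 5).div (hcoshpow 2 y)
    (pow_ne_zero 2 (Real.cosh_pos y).ne'))
  have b : HasDerivAt (fun y => Real.sinh y ^ 3) (3 * Real.sinh y ^ 2 * Real.cosh y) y :=
    (Real.hasDerivAt_sinh y).pow 3
  have c := ((b.const_mul 6).div (hcoshpow 4 y) (pow_ne_zero 4 (Real.cosh_pos y).ne'))
  have h := a.sub c
  refine h.congr_deriv ?_
  have hc := (Real.cosh_pos y).ne'
  field_simp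
  ring

private lemma hD4 (y : ℝ) :
    HasDerivAt (fun y => 5 * (Real.cosh y)⁻¹ - 28 * Real.sinh y ^ 2 / Real.cosh y ^ 3
        + 24 * Real.sinh y ^ 4 / Real.cosh y ^ 5)
      (-61 * Real.sinh y / Real.cosh y ^ 2 + 180 * Real.sinh y ^ 3 / Real.cosh y ^ 4
        - 120 * Real.sinh y ^ 5 / Real.cosh y ^ 6) y := by
  have a := (hD0 y).const_mul 5
  have b : HasDerivAt (fun y => Real.sinh y ^ 2) (2 * Real.sinh y ^ 1 * Real.cosh y) y :=
    (Real.hasDerivAt_sinh y).pow 2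
  have c := ((b.const_mul 28).div (hcoshpow 3 y) (pow_ne_zero 3 (Real.cosh_pos y).ne'))
  have d : HasDerivAt (fun y => Real.sinh y ^ 4) (4 * Real.sinh y ^ 3 * Real.cosh y) y :=
    (Real.hasDerivAt_sinh y).pow 4
  have e := ((d.const_mul 24).div (hcoshpow 5 y) (pow_ne_zero 5 (Real.cosh_pos y).ne'))
  have h := (a.sub c).add e
  refine h.congr_deriv ?_
  have hc := (Real.cosh_pos y).ne'
  field_simp
  ring

/-- The solitary wave `u(x,t) = sech(x - t/2)` solves the Rosenau equation
`u_t + u_x + u_{xxxxt} + (g(u))_x = 0` with `g(u) = -10u³ + 12u⁵`. -/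
theorem stmt_18 (u : ℝ → ℝ → ℝ)
    (hu : ∀ x t : ℝ, u x t = 1 / Real.cosh (x - (1 / 2) * t)) :
    ∀ x t : ℝ,
      deriv (fun t' => u x t') t + deriv (fun x' => u x' t) x
        + deriv (fun t' => iteratedDeriv 4 (fun x' => u x' t') x) t
        + deriv (fun x' => -10 * u x' t ^ 3 + 12 * u x' t ^ 5) x = 0 := by
  have hu' : u = fun x t => (Real.cosh (x - (1 / 2) * t))⁻¹ := by
    funext x t; rw [hu]; rw [one_div]
  subst hu'
  intro x t
  set S := Real.sinh (x - (1 / 2) * t) with hS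
  set C := Real.cosh (x - (1 / 2) * t) with hC
  have hCne : C ≠ 0 := (Real.cosh_pos _).ne'
  -- inner derivative lemmas
  have innT : HasDerivAt (fun t' : ℝ => x - 1 / 2 * t') (-(1 / 2)) t := by
    simpa using ((hasDerivAt_id t).const_mul (1/2 : ℝ)).const_sub x
  have innX : HasDerivAt (fun x' : ℝ => x' - 1 / 2 * t) 1 x := by
    simpa using (hasDerivAt_id x).sub_const (1 / 2 * t)
  -- u_t
  have h1 : deriv (fun t' => (Real.cosh (x - 1 / 2 * t'))⁻¹) t
      = (-S / C ^ 2) * (-(1 / 2)) :=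
    by have := ((hD0 (x - 1/2*t)).comp t innT).deriv; exact this
  -- u_x
  have h2 : deriv (fun x' => (Real.cosh (x' - 1 / 2 * t))⁻¹) x = (-S / C ^ 2) * 1 :=
    by have := ((hD0 (x - 1/2*t)).comp x innX).deriv; exact this
  -- iterated derivative in x: for every t'
  have hIter : ∀ t' : ℝ, iteratedDeriv 4 (fun x' => (Real.cosh (x' - 1 / 2 * t'))⁻¹) x
      = 5 * (Real.cosh (x - 1/2*t'))⁻¹
        - 28 * Real.sinh (x - 1/2*t') ^ 2 / Real.cosh (x - 1/2*t') ^ 3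
        + 24 * Real.sinh (x - 1/2*t') ^ 4 / Real.cosh (x - 1/2*t') ^ 5 := by
    intro t'
    have inn : ∀ z : ℝ, HasDerivAt (fun x' : ℝ => x' - 1 / 2 * t') 1 z := fun z => by
      simpa using (hasDerivAt_id z).sub_const (1 / 2 * t')
    have e1 : deriv (fun x' => (Real.cosh (x' - 1 / 2 * t'))⁻¹)
        = fun x' => -Real.sinh (x' - 1/2*t') / Real.cosh (x' - 1/2*t') ^ 2 := by
      funext z
      simpa [Function.comp_def] using ((hD0 (z - 1/2*t')).comp z (inn z)).deriv
    have e2 : deriv (fun x' => -Real.sinh (x' - 1/2*t') / Real.cosh (x' - 1/2*t') ^ 2)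
        = fun x' => -(Real.cosh (x' - 1/2*t'))⁻¹
            + 2 * Real.sinh (x' - 1/2*t') ^ 2 / Real.cosh (x' - 1/2*t') ^ 3 := by
      funext z
      simpa [Function.comp_def] using ((hD1 (z - 1/2*t')).comp z (inn z)).deriv
    have e3 : deriv (fun x' => -(Real.cosh (x' - 1/2*t'))⁻¹
            + 2 * Real.sinh (x' - 1/2*t') ^ 2 / Real.cosh (x' - 1/2*t') ^ 3)
        = fun x' => 5 * Real.sinh (x' - 1/2*t') / Real.cosh (x' - 1/2*t') ^ 2
            - 6 * Real.sinh (x' - 1/2*t') ^ 3 / Real.cosh (x' - 1/2*t') ^ 4 := by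
      funext z
      simpa [Function.comp_def] using ((hD2 (z - 1/2*t')).comp z (inn z)).deriv
    have e4 : deriv (fun x' => 5 * Real.sinh (x' - 1/2*t') / Real.cosh (x' - 1/2*t') ^ 2
            - 6 * Real.sinh (x' - 1/2*t') ^ 3 / Real.cosh (x' - 1/2*t') ^ 4)
        = fun x' => 5 * (Real.cosh (x' - 1/2*t'))⁻¹
            - 28 * Real.sinh (x' - 1/2*t') ^ 2 / Real.cosh (x' - 1/2*t') ^ 3
            + 24 * Real.sinh (x' - 1/2*t') ^ 4 / Real.cosh (x' - 1/2*t') ^ 5 := by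
      funext z
      simpa [Function.comp_def] using ((hD3 (z - 1/2*t')).comp z (inn z)).deriv
    rw [iteratedDeriv_eq_iterate]
    show deriv (deriv (deriv (deriv (fun x' => (Real.cosh (x' - 1 / 2 * t'))⁻¹)))) x = _
    rw [e1, e2, e3, e4]
  -- u_xxxxt
  have h3 : deriv (fun t' => iteratedDeriv 4 (fun x' => (Real.cosh (x' - 1/2*t'))⁻¹) x) t
      = (-61 * S / C ^ 2 + 180 * S ^ 3 / C ^ 4 - 120 * S ^ 5 / C ^ 6) * (-(1/2)) := by
    have congr1 : (fun t' => iteratedDeriv 4 (fun x' => (Real.cosh (x' - 1/2*t'))⁻¹) x)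
        = fun t' => 5 * (Real.cosh (x - 1/2*t'))⁻¹
            - 28 * Real.sinh (x - 1/2*t') ^ 2 / Real.cosh (x - 1/2*t') ^ 3
            + 24 * Real.sinh (x - 1/2*t') ^ 4 / Real.cosh (x - 1/2*t') ^ 5 :=
      funext hIter
    rw [congr1]
    exact ((hD4 (x - 1/2*t)).comp t innT).deriv
  -- (g(u))_x
  have h4 : deriv (fun x' => -10 * ((Real.cosh (x' - 1/2*t))⁻¹) ^ 3
        + 12 * ((Real.cosh (x' - 1/2*t))⁻¹) ^ 5) x
      = -10 * (3 * (C⁻¹) ^ 2 * ((-S / C ^ 2) * 1)) + 12 * (5 * (C⁻¹) ^ 4 * ((-S / C ^ 2) * 1)) := by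
    have base : HasDerivAt (fun x' => (Real.cosh (x' - 1/2*t))⁻¹) ((-S / C ^ 2) * 1) x :=
      by have := (hD0 (x - 1/2*t)).comp x innX; exact this
    have p3 : HasDerivAt (fun x' => ((Real.cosh (x' - 1/2*t))⁻¹) ^ 3)
        (3 * (C⁻¹) ^ 2 * ((-S / C ^ 2) * 1)) x := by
      refine (base.pow 3).congr_deriv ?_
      norm_num [hC]
    have p5 : HasDerivAt (fun x' => ((Real.cosh (x' - 1/2*t))⁻¹) ^ 5)
        (5 * (C⁻¹) ^ 4 * ((-S / C ^ 2) * 1)) x := by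
      refine (base.pow 5).congr_deriv ?_
      norm_num [hC]
    exact ((p3.const_mul (-10)).add (p5.const_mul 12)).deriv
  rw [h1, h2, h3, h4]
  have hsq : S ^ 2 = C ^ 2 - 1 := by
    rw [hS, hC]; rw [Real.sinh_sq]
  have e3 : S ^ 3 = S * (C ^ 2 - 1) := by rw [← hsq]; ring
  have e5 : S ^ 5 = S * (C ^ 2 - 1) ^ 2 := by rw [← hsq]; ring
  rw [e3, e5]
  field_simp
  ring
end
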